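/- Let π be the bivector on ℝ⁴ from the Lefschetz singularity model (k ≡ 1), viewed pointwise as an antisymmetric 4×4 matrix B(q) acting on covectors. Then for every q ≠ 0, the matrix B(q) has rank exactly 2, and B(0) = 0. -/
import Mathlib


/-- The Lefschetz-model bivector on ℝ⁴ (coordinates (x₁,y₁,x₂,y₂) = (q 0, q 1, q 2, q 3), k ≡ 1). -/
noncomputable def lefPi (q : Fin 4 → ℝ) : Matrix (Fin 4) (Fin 4) ℝ :=
  !![0,                      q 2 ^ 2 + q 3 ^ 2,      -(q 0) * q 3 + q 1 * q 2, -(q 1) * q 3 - q 0 * q 2;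
     -(q 2 ^ 2 + q 3 ^ 2),   0,                      q 0 * q 2 + q 1 * q 3,    -(q 0) * q 3 + q 1 * q 2;
     q 0 * q 3 - q 1 * q 2,  -(q 0 * q 2 + q 1 * q 3), 0,                      q 0 ^ 2 + q 1 ^ 2;
     q 1 * q 3 + q 0 * q 2,  q 0 * q 3 - q 1 * q 2,   -(q 0 ^ 2 + q 1 ^ 2),    0]

/-- For q ≠ 0 the matrix of the Lefschetz-model bivector has rank exactly 2, and it vanishes at 0. -/
theorem lefPi_rank :
    (∀ q : Fin 4 → ℝ, q ≠ 0 → (lefPi q).rank = 2) ∧ lefPi 0 = 0 := by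
  constructor
  · intro q hq
    have hnpos0 : 0 < q 0 ^ 2 + q 1 ^ 2 + q 2 ^ 2 + q 3 ^ 2 := by
      rcases Function.ne_iff.mp hq with ⟨i, hi⟩
      simp only [Pi.zero_apply] at hi
      fin_cases i
      · have hp : 0 < q 0 * q 0 := mul_self_pos.mpr hi
        nlinarith [sq_nonneg (q 1), sq_nonneg (q 2), sq_nonneg (q 3)]
      · have hp : 0 < q 1 * q 1 := mul_self_pos.mpr hi
        nlinarith [sq_nonneg (q 0), sq_nonneg (q 2), sq_nonneg (q 3)]
      · have hp : 0 < q 2 * q 2 := mul_self_pos.mpr hi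
        nlinarith [sq_nonneg (q 0), sq_nonneg (q 1), sq_nonneg (q 3)]
      · have hp : 0 < q 3 * q 3 := mul_self_pos.mpr hi
        nlinarith [sq_nonneg (q 0), sq_nonneg (q 1), sq_nonneg (q 2)]
    set a := q 0 with ha
    set b := q 1 with hb
    set c := q 2 with hc
    set d := q 3 with hd
    set u : Fin 4 → ℝ := ![-d, c, b, -a] with hu
    set v : Fin 4 → ℝ := ![c, d, -a, -b] with hv
    set n : ℝ := a ^ 2 + b ^ 2 + c ^ 2 + d ^ 2 with hn
    have hnpos : 0 < n := by rw [hn]; exact hnpos0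
    -- upper bound: factor through a 2 × 4 matrix
    have hle : (lefPi q).rank ≤ 2 := by
      set C : Matrix (Fin 4) (Fin 2) ℝ :=
        Matrix.of (fun i k => if k = 0 then v i else u i) with hC
      set R : Matrix (Fin 2) (Fin 4) ℝ :=
        Matrix.of (fun k j => if k = 0 then u j else -v j) with hR
      have hfac : lefPi q = C * R := by
        ext i j
        fin_cases i <;> fin_cases j <;>
          simp [lefPi, Matrix.mul_apply, Fin.sum_univ_two, hC, hR, hu, hv] <;> ring
      calc (lefPi q).rank = (C * R).rank := by rw [hfac]
        _ ≤ R.rank := Matrix.rank_mul_le_right C R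
        _ ≤ 2 := by simpa using R.rank_le_card_height
    -- lower bound: u and v are in the range
    have hBu : (lefPi q).mulVec u = n • v := by
      ext i
      fin_cases i <;>
        simp [lefPi, Matrix.mulVec, dotProduct, Fin.sum_univ_four, hu, hv, hn] <;> ring
    have hBv : (lefPi q).mulVec v = (-n) • u := by
      ext i
      fin_cases i <;>
        simp [lefPi, Matrix.mulVec, dotProduct, Fin.sum_univ_four, hu, hv, hn] <;> ring
    have hvmem : v ∈ LinearMap.range (lefPi q).mulVecLin := by
      refine ⟨n⁻¹ • u, ?_⟩
      rw [Matrix.mulVecLin_apply, Matrix.mulVec_smul, hBu, smul_smul,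
        inv_mul_cancel₀ hnpos.ne', one_smul]
    have humem : u ∈ LinearMap.range (lefPi q).mulVecLin := by
      refine ⟨(-n⁻¹) • v, ?_⟩
      rw [Matrix.mulVecLin_apply, Matrix.mulVec_smul, hBv, smul_smul]
      have : -n⁻¹ * -n = 1 := by field_simp
      rw [this, one_smul]
    have hli : LinearIndependent ℝ ![u, v] := by
      rw [LinearIndependent.pair_iff]
      intro s t hst
      have h0 := congrFun hst 0
      have h1 := congrFun hst 1
      have h2 := congrFun hst 2
      have h3 := congrFun hst 3
      simp [hu, hv] at h0 h1 h2 h3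
      have hne : a ^ 2 + b ^ 2 + c ^ 2 + d ^ 2 ≠ 0 := by rw [← hn]; exact hnpos.ne'
      have hs : s * (a ^ 2 + b ^ 2 + c ^ 2 + d ^ 2) = 0 := by
        linear_combination (-d) * h0 + c * h1 + b * h2 + (-a) * h3
      have ht : t * (a ^ 2 + b ^ 2 + c ^ 2 + d ^ 2) = 0 := by
        linear_combination c * h0 + d * h1 + (-a) * h2 + (-b) * h3
      exact ⟨by rcases mul_eq_zero.mp hs with h | h; exact h; exact absurd h hne,
        by rcases mul_eq_zero.mp ht with h | h; exact h; exact absurd h hne⟩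
    have hspan : Submodule.span ℝ (Set.range ![u, v]) ≤
        LinearMap.range (lefPi q).mulVecLin := by
      rw [Submodule.span_le]
      rintro x ⟨i, rfl⟩
      fin_cases i
      · exact humem
      · exact hvmem
    have hge : 2 ≤ (lefPi q).rank := by
      have := Submodule.finrank_mono hspan
      rwa [finrank_span_eq_card hli, Fintype.card_fin] at this
    omega
  · ext i j
    fin_cases i <;> fin_cases j <;>
      simp [lefPi, Matrix.vecHead, Matrix.vecTail]
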